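/- arXiv:2110.09732 — 2 statements merged into one kernel-verified Lean document; each statement's English description precedes it below -/
import Mathlib

section
/- The 5-vertex 'house' graph G₁ with vertices u₀, u₁, u₂, u₃, u₄ and edges u₀u₁, u₀u₄, u₁u₂, u₁u₄, u₂u₃, u₃u₄ satisfies γ(G₁) = γ∞(G₁) = θ(G₁) = 2, yet the minimum dominating set {u₁, u₄} is not an eternal dominating set of G₁. -/
open SimpleGraph

variable {V : Type*}

/-- `D` is a dominating set of `G`. -/
def IsDomSet (G : SimpleGraph V) (D : Finset V) : Prop :=
  ∀ v : V, ∃ u ∈ D, u = v ∨ G.Adj u v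

/-- A family of guard configurations closed under defending any attack: every member
of the family is a dominating set, and for every attack on an unguarded vertex `v`
some guard on a neighbour of `v` can move to `v` so that the resulting configuration
is again in the family.  The defender can perpetually defend every infinite sequence
of attacks starting from `D` iff `D` belongs to such a family. -/
def IsEDFamily [DecidableEq V] (G : SimpleGraph V) (F : Set (Finset V)) : Prop :=
  ∀ D ∈ F, IsDomSet G D ∧
    ∀ v ∉ D, ∃ u ∈ D, G.Adj u v ∧ insert v (D.erase u) ∈ F

/-- The eternal domination number `γ∞(G)`: the least number of guards admitting a
winning defence strategy. -/
noncomputable def eternalDomNum [DecidableEq V] (G : SimpleGraph V) : ℕ :=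
  sInf {k | ∃ F : Set (Finset V), F.Nonempty ∧ (∀ D ∈ F, D.card = k) ∧ IsEDFamily G F}

/-- The independence number `α(G)`. -/
noncomputable def indepNum (G : SimpleGraph V) : ℕ :=
  sSup {k | ∃ s : Finset V, s.card = k ∧ ∀ u ∈ s, ∀ v ∈ s, ¬ G.Adj u v}

/-- The clique covering number `θ(G)`: the least `k` such that the vertex set can be
partitioned into `k` cliques, i.e. the complement of `G` is properly `k`-colourable. -/
noncomputable def cliqueCoverNum (G : SimpleGraph V) : ℕ :=
  sInf {k | Nonempty (Gᶜ.Coloring (Fin k))}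

/-- The domination number `γ(G)`. -/
noncomputable def domNum (G : SimpleGraph V) : ℕ :=
  sInf {k | ∃ D : Finset V, D.card = k ∧ IsDomSet G D}

/-- `D` is an eternal dominating set of `G`: guards placed on `D` can defend every
infinite sequence of attacks. -/
def IsEternalDomSet [DecidableEq V] (G : SimpleGraph V) (D : Finset V) : Prop :=
  ∃ F : Set (Finset V), IsEDFamily G F ∧ D ∈ F ∧ ∀ D' ∈ F, D'.card = D.card

/-- The 5-vertex house graph. -/
def houseGraph : SimpleGraph (Fin 5) :=
  SimpleGraph.fromRel (fun i j =>
    (i = 0 ∧ j = 1) ∨ (i = 0 ∧ j = 4) ∨ (i = 1 ∧ j = 2) ∨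
    (i = 1 ∧ j = 4) ∨ (i = 2 ∧ j = 3) ∨ (i = 3 ∧ j = 4))

instance : DecidableRel houseGraph.Adj := fun a b =>
  decidable_of_iff' _ (SimpleGraph.fromRel_adj _ a b)

instance : DecidableRel houseGraphᶜ.Adj := fun a b =>
  inferInstanceAs (Decidable (a ≠ b ∧ ¬ houseGraph.Adj a b))

instance : DecidablePred (IsDomSet houseGraph) := fun D =>
  inferInstanceAs (Decidable (∀ v, ∃ u ∈ D, u = v ∨ houseGraph.Adj u v))

/-- The closed family of guard configurations. -/
def Ffin : Finset (Finset (Fin 5)) := {{2,4},{0,2},{1,2},{1,3},{0,3},{3,4}}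

lemma Ffin_ED : ∀ D ∈ Ffin, IsDomSet houseGraph D ∧
    ∀ v ∉ D, ∃ u ∈ D, houseGraph.Adj u v ∧ insert v (D.erase u) ∈ Ffin := by
  decide

lemma domset_card : ∀ D : Finset (Fin 5), IsDomSet houseGraph D → 2 ≤ D.card := by
  decide

/-- The house graph satisfies `γ = γ∞ = θ = 2`, yet the minimum dominating set
`{u₁, u₄}` is not an eternal dominating set. -/
theorem houseGraph_not_eternal :
    domNum houseGraph = 2 ∧ eternalDomNum houseGraph = 2 ∧
    cliqueCoverNum houseGraph = 2 ∧
    IsDomSet houseGraph {1, 4} ∧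
    ¬ IsEternalDomSet houseGraph ({1, 4} : Finset (Fin 5)) := by
  have hdomS : ({1,4} : Finset (Fin 5)).card = 2 ∧ IsDomSet houseGraph {1,4} := by decide
  have hdom2 : (2 : ℕ) ∈ {k | ∃ D : Finset (Fin 5), D.card = k ∧ IsDomSet houseGraph D} :=
    ⟨{1,4}, hdomS⟩
  have hdomlb : ∀ k ∈ {k | ∃ D : Finset (Fin 5), D.card = k ∧ IsDomSet houseGraph D}, 2 ≤ k := by
    rintro k ⟨D, rfl, hD⟩
    exact domset_card D hD
  have hγ : domNum houseGraph = 2 :=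
    le_antisymm (Nat.sInf_le hdom2) (le_csInf ⟨2, hdom2⟩ hdomlb)
  have hEDfam : IsEDFamily houseGraph (↑Ffin : Set (Finset (Fin 5))) := by
    intro D hD
    obtain ⟨h1, h2⟩ := Ffin_ED D (Finset.mem_coe.mp hD)
    exact ⟨h1, fun v hv => by
      obtain ⟨u, hu, hadj, hmem⟩ := h2 v hv
      exact ⟨u, hu, hadj, Finset.mem_coe.mpr hmem⟩⟩
  have hE2 : (2 : ℕ) ∈ {k | ∃ F : Set (Finset (Fin 5)), F.Nonempty ∧
      (∀ D ∈ F, D.card = k) ∧ IsEDFamily houseGraph F} := by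
    refine ⟨↑Ffin, ⟨{2,4}, by decide⟩, ?_, hEDfam⟩
    intro D hD
    have : D ∈ Ffin := Finset.mem_coe.mp hD
    revert this; revert D; decide
  have hElb : ∀ k ∈ {k | ∃ F : Set (Finset (Fin 5)), F.Nonempty ∧
      (∀ D ∈ F, D.card = k) ∧ IsEDFamily houseGraph F}, 2 ≤ k := by
    rintro k ⟨F, ⟨D, hD⟩, hcard, hED⟩
    have := (hED D hD).1
    rw [← hcard D hD]
    exact domset_card D this
  have hEinf : eternalDomNum houseGraph = 2 :=
    le_antisymm (Nat.sInf_le hE2) (le_csInf ⟨2, hE2⟩ hElb)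
  have hθ2 : (2 : ℕ) ∈ {k | Nonempty (houseGraphᶜ.Coloring (Fin k))} := by
    refine ⟨SimpleGraph.Coloring.mk (fun v => if v = 2 ∨ v = 3 then 1 else 0) ?_⟩
    decide
  have hθlb : ∀ k ∈ {k | Nonempty (houseGraphᶜ.Coloring (Fin k))}, 2 ≤ k := by
    rintro k ⟨C⟩
    match k with
    | 0 => exact (C 0).elim0
    | 1 =>
      have h02 : houseGraphᶜ.Adj 0 2 := by decide
      exact absurd (Subsingleton.elim (C 0) (C 2)) (C.valid h02)
    | n + 2 => omega
  have hθ : cliqueCoverNum houseGraph = 2 :=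
    le_antisymm (Nat.sInf_le hθ2) (le_csInf ⟨2, hθ2⟩ hθlb)
  refine ⟨hγ, hEinf, hθ, hdomS.2, ?_⟩
  rintro ⟨F, hED, hmem, hcards⟩
  obtain ⟨-, h⟩ := hED _ hmem
  obtain ⟨u, hu, hadj, hmem'⟩ := h 0 (by decide)
  have hdom' := (hED _ hmem').1
  have hu' : u = 1 ∨ u = 4 := by
    rcases Finset.mem_insert.mp hu with h | h
    · exact Or.inl h
    · exact Or.inr (Finset.mem_singleton.mp h)
  rcases hu' with rfl | rfl
  · exact absurd hdom' (by decide)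
  · exact absurd hdom' (by decide)
end

section
/- If G is a smallest graph (with respect to number of vertices) having γ∞(G) < θ(G) and, among such smallest graphs, has the maximum number of edges, then G is both vertex-critical and edge-critical with respect to θ. -/
open SimpleGraph

variable {V : Type*}

section Aux

variable {W : Type*}

private lemma ednSet_nonempty [DecidableEq V] [Fintype V] (G : SimpleGraph V) :
    {k | ∃ F : Set (Finset V), F.Nonempty ∧ (∀ D ∈ F, D.card = k) ∧ IsEDFamily G F}.Nonempty := by
  refine ⟨(Finset.univ : Finset V).card, {(Finset.univ : Finset V)}, ⟨Finset.univ, rfl⟩, ?_, ?_⟩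
  · rintro D hD
    rw [Set.mem_singleton_iff] at hD; subst hD; rfl
  · rintro D hD
    rw [Set.mem_singleton_iff] at hD; subst hD
    exact ⟨fun v => ⟨v, Finset.mem_univ v, Or.inl rfl⟩,
      fun v hv => absurd (Finset.mem_univ v) hv⟩

private lemma exists_optimal [DecidableEq V] [Fintype V] (G : SimpleGraph V) :
    ∃ F : Set (Finset V), F.Nonempty ∧ (∀ D ∈ F, D.card = eternalDomNum G) ∧ IsEDFamily G F :=
  Nat.sInf_mem (ednSet_nonempty G)

private lemma eternalDomNum_le [DecidableEq V] {G : SimpleGraph V} {k : ℕ}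
    (h : ∃ F : Set (Finset V), F.Nonempty ∧ (∀ D ∈ F, D.card = k) ∧ IsEDFamily G F) :
    eternalDomNum G ≤ k := Nat.sInf_le h

private lemma eternalDomNum_anti [DecidableEq V] [Fintype V] {G G' : SimpleGraph V}
    (h : G ≤ G') : eternalDomNum G' ≤ eternalDomNum G := by
  obtain ⟨F, hne, hcard, hfam⟩ := exists_optimal G
  refine eternalDomNum_le ⟨F, hne, hcard, fun D hD => ?_⟩
  obtain ⟨hdom, hresp⟩ := hfam D hD
  refine ⟨fun w => ?_, fun w hw => ?_⟩
  · obtain ⟨u, hu, h'⟩ := hdom w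
    exact ⟨u, hu, h'.imp id fun ha => h ha⟩
  · obtain ⟨u, hu, hadj, hmem⟩ := hresp w hw
    exact ⟨u, hu, h hadj, hmem⟩

private lemma eternalDomNum_comap_le [DecidableEq V] [DecidableEq W] [Fintype V]
    (e : W ≃ V) (G : SimpleGraph V) :
    eternalDomNum (G.comap ⇑e) ≤ eternalDomNum G := by
  classical
  obtain ⟨F, ⟨D₀, hD₀⟩, hcard, hfam⟩ := exists_optimal G
  refine eternalDomNum_le ⟨(fun D : Finset V => D.map e.symm.toEmbedding) '' F,
    ⟨_, ⟨D₀, hD₀, rfl⟩⟩, ?_, ?_⟩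
  · rintro _ ⟨D, hD, rfl⟩
    rw [Finset.card_map]; exact hcard D hD
  · rintro _ ⟨D, hD, rfl⟩
    obtain ⟨hdom, hresp⟩ := hfam D hD
    constructor
    · intro w
      obtain ⟨u, hu, h'⟩ := hdom (e w)
      refine ⟨e.symm u, Finset.mem_map_of_mem _ hu, ?_⟩
      rcases h' with h1 | h2
      · left; rw [h1, Equiv.symm_apply_apply]
      · right
        show G.Adj (e (e.symm u)) (e w)
        rw [Equiv.apply_symm_apply]; exact h2
    · intro w hw
      have hw' : e w ∉ D := by
        intro h
        apply hw
        have := Finset.mem_map_of_mem e.symm.toEmbedding h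
        simpa using this
      obtain ⟨u, hu, hadj, hmem⟩ := hresp (e w) hw'
      refine ⟨e.symm u, Finset.mem_map_of_mem _ hu, ?_, ?_⟩
      · show G.Adj (e (e.symm u)) (e w)
        rw [Equiv.apply_symm_apply]; exact hadj
      · refine ⟨insert (e w) (D.erase u), hmem, ?_⟩
        simp only [Finset.map_insert, Finset.map_erase]
        simp

private lemma comap_comap_eq (e : W ≃ V) (G : SimpleGraph V) :
    (G.comap ⇑e).comap ⇑e.symm = G := by
  ext a b
  simp

private lemma eternalDomNum_comap [DecidableEq V] [DecidableEq W] [Fintype W]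
    (e : W ≃ V) (G : SimpleGraph V) :
    eternalDomNum (G.comap ⇑e) = eternalDomNum G := by
  haveI : Fintype V := Fintype.ofEquiv W e
  refine le_antisymm (eternalDomNum_comap_le e G) ?_
  have h := eternalDomNum_comap_le e.symm (G.comap ⇑e)
  rwa [comap_comap_eq] at h

private lemma ccnSet_nonempty [Fintype V] (G : SimpleGraph V) :
    {k | Nonempty (Gᶜ.Coloring (Fin k))}.Nonempty :=
  ⟨Fintype.card V, ⟨Coloring.mk (fun w => (Fintype.equivFin V) w)
    fun hadj h => hadj.ne ((Fintype.equivFin V).injective h)⟩⟩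

private lemma exists_coloring [Fintype V] (G : SimpleGraph V) :
    Nonempty (Gᶜ.Coloring (Fin (cliqueCoverNum G))) :=
  Nat.sInf_mem (ccnSet_nonempty G)

private lemma cliqueCoverNum_le {G : SimpleGraph V} {k : ℕ}
    (h : Nonempty (Gᶜ.Coloring (Fin k))) : cliqueCoverNum G ≤ k := Nat.sInf_le h

private lemma cliqueCoverNum_comap (e : W ≃ V) (G : SimpleGraph V) :
    cliqueCoverNum (G.comap ⇑e) = cliqueCoverNum G := by
  have key : ∀ k : ℕ, Nonempty ((G.comap ⇑e)ᶜ.Coloring (Fin k)) ↔ Nonempty (Gᶜ.Coloring (Fin k)) := by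
    intro k
    constructor
    · rintro ⟨c⟩
      refine ⟨Coloring.mk (fun x => c (e.symm x)) fun {a b} hadj => ?_⟩
      apply c.valid
      rw [compl_adj] at hadj ⊢
      refine ⟨e.symm.injective.ne hadj.1, fun h => hadj.2 ?_⟩
      rwa [comap_adj, Equiv.apply_symm_apply, Equiv.apply_symm_apply] at h
    · rintro ⟨c⟩
      refine ⟨Coloring.mk (fun x => c (e x)) fun {a b} hadj => ?_⟩
      apply c.valid
      rw [compl_adj] at hadj ⊢
      exact ⟨e.injective.ne hadj.1, fun h => hadj.2 (by rwa [comap_adj])⟩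
  unfold cliqueCoverNum
  congr 1
  ext k
  exact key k

private lemma ccn_induce_le [Fintype V] (G : SimpleGraph V) (v : V) :
    cliqueCoverNum (G.induce {u | u ≠ v}) ≤ cliqueCoverNum G := by
  obtain ⟨c⟩ := exists_coloring G
  refine cliqueCoverNum_le ⟨Coloring.mk (fun w => c w.val) fun {a b} hadj => ?_⟩
  apply c.valid
  rw [compl_adj] at hadj ⊢
  exact ⟨fun h => hadj.1 (Subtype.ext h), fun h => hadj.2 h⟩

private lemma ccn_le_induce_succ [Fintype V] [DecidableEq V] (G : SimpleGraph V) (v : V) :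
    cliqueCoverNum G ≤ cliqueCoverNum (G.induce {u | u ≠ v}) + 1 := by
  obtain ⟨c⟩ := exists_coloring (G.induce {u | u ≠ v})
  set t := cliqueCoverNum (G.induce {u | u ≠ v}) with ht
  refine cliqueCoverNum_le ⟨Coloring.mk
    (fun w => if h : w = v then Fin.last t else (c ⟨w, h⟩).castSucc) fun {a b} hadj => ?_⟩
  rw [compl_adj] at hadj
  by_cases ha : a = v <;> by_cases hb : b = v
  · exact absurd (ha.trans hb.symm) hadj.1
  · simp only [dif_pos ha, dif_neg hb]
    exact (Fin.castSucc_lt_last _).ne'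
  · simp only [dif_pos hb, dif_neg ha]
    exact (Fin.castSucc_lt_last _).ne
  · simp only [dif_neg ha, dif_neg hb]
    intro h
    refine c.valid ?_ (Fin.castSucc_injective _ h)
    rw [compl_adj]
    exact ⟨fun hh => hadj.1 (congrArg Subtype.val hh), fun hh => hadj.2 hh⟩

private lemma ccn_le_addEdge_succ [Fintype V] [DecidableEq V] {G : SimpleGraph V} {u v : V}
    (hne : u ≠ v) :
    cliqueCoverNum G ≤ cliqueCoverNum (G ⊔ SimpleGraph.fromEdgeSet {s(u, v)}) + 1 := by
  obtain ⟨c⟩ := exists_coloring (G ⊔ SimpleGraph.fromEdgeSet {s(u, v)})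
  set t := cliqueCoverNum (G ⊔ SimpleGraph.fromEdgeSet {s(u, v)}) with ht
  refine cliqueCoverNum_le ⟨Coloring.mk
    (fun w => if w = v then Fin.last t else (c w).castSucc) fun {a b} hadj => ?_⟩
  rw [compl_adj] at hadj
  by_cases ha : a = v <;> by_cases hb : b = v
  · exact absurd (ha.trans hb.symm) hadj.1
  · simp only [if_pos ha, if_neg hb]
    exact (Fin.castSucc_lt_last _).ne'
  · simp only [if_pos hb, if_neg ha]
    exact (Fin.castSucc_lt_last _).ne
  · simp only [if_neg ha, if_neg hb]
    intro h
    refine c.valid ?_ (Fin.castSucc_injective _ h)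
    rw [compl_adj]
    refine ⟨hadj.1, ?_⟩
    intro habs
    rcases habs with h1 | h2
    · exact hadj.2 h1
    · rw [fromEdgeSet_adj] at h2
      obtain ⟨h2m, -⟩ := h2
      rw [Set.mem_singleton_iff, Sym2.eq_iff] at h2m
      rcases h2m with ⟨-, h3⟩ | ⟨h3, -⟩
      · exact hb h3
      · exact ha h3

private lemma eternalDomNum_induce_le [Fintype V] [DecidableEq V] (G : SimpleGraph V) (v : V) :
    eternalDomNum (G.induce {u | u ≠ v}) ≤ eternalDomNum G := by
  classical
  obtain ⟨F, ⟨D₀, hD₀⟩, hcard, hfam⟩ := exists_optimal G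
  set k := eternalDomNum G with hk
  set emb : ↥{u : V | u ≠ v} ↪ V := Function.Embedding.subtype _ with hembdef
  have hemb : ∀ (E : Finset ↥{u : V | u ≠ v}) (x : V),
      x ∈ E.map emb ↔ ∃ a ∈ E, a.val = x := by
    intro E x
    simp [hembdef]
  have hnotv : ∀ E : Finset ↥{u : V | u ≠ v}, v ∉ E.map emb := by
    intro E hv
    obtain ⟨a, -, ha⟩ := (hemb E v).1 hv
    exact a.2 ha
  by_cases hex : ∃ D ∈ F, v ∉ D
  · refine eternalDomNum_le ⟨{E | E.map emb ∈ F}, ?_, ?_, ?_⟩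
    · obtain ⟨D, hD, hvD⟩ := hex
      refine ⟨D.subtype _, ?_⟩
      have hmemP : ∀ x ∈ D, x ∈ {u : V | u ≠ v} := by
        intro x hx hxv
        exact hvD (hxv ▸ hx)
      show D.subtype _ ∈ {E | E.map emb ∈ F}
      rw [Set.mem_setOf_eq, hembdef, Finset.subtype_map_of_mem hmemP]
      exact hD
    · intro E hE
      have h1 := hcard _ hE
      rwa [Finset.card_map] at h1
    · intro E hE
      obtain ⟨hdom, hresp⟩ := hfam _ hE
      constructor
      · intro w
        obtain ⟨u, hu, h'⟩ := hdom w.val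
        obtain ⟨a, haE, hav⟩ := (hemb E u).1 hu
        refine ⟨a, haE, ?_⟩
        rcases h' with h1 | h2
        · exact Or.inl (Subtype.ext (hav.trans h1))
        · right
          show G.Adj a.val w.val
          rw [hav]; exact h2
      · intro w hw
        have hw' : w.val ∉ E.map emb := by
          intro h
          obtain ⟨a, haE, hav⟩ := (hemb _ _).1 h
          exact hw (Subtype.ext hav ▸ haE)
        obtain ⟨u, hu, hadj, hmem⟩ := hresp w.val hw'
        obtain ⟨a, haE, hav⟩ := (hemb E u).1 hu
        refine ⟨a, haE, ?_, ?_⟩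
        · show G.Adj a.val w.val
          rw [hav]; exact hadj
        · show (insert w (E.erase a)).map emb ∈ F
          rw [Finset.map_insert, Finset.map_erase]
          have e1 : emb w = w.val := rfl
          have e2 : emb a = u := hav
          rw [e1, e2]
          exact hmem
  · push_neg at hex
    refine le_trans (eternalDomNum_le (k := k - 1)
      ⟨{E | insert v (E.map emb) ∈ F}, ?_, ?_, ?_⟩) (Nat.sub_le _ _)
    · refine ⟨(D₀.erase v).subtype _, ?_⟩
      have hmemP : ∀ x ∈ D₀.erase v, x ∈ {u : V | u ≠ v} := by
        intro x hx
        exact Finset.ne_of_mem_erase hx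
      show (D₀.erase v).subtype _ ∈ {E | insert v (E.map emb) ∈ F}
      rw [Set.mem_setOf_eq, hembdef, Finset.subtype_map_of_mem hmemP,
        Finset.insert_erase (hex D₀ hD₀)]
      exact hD₀
    · intro E hE
      have h1 : v ∉ E.map emb := hnotv E
      have h2 := hcard _ hE
      rw [Finset.card_insert_of_notMem h1, Finset.card_map] at h2
      omega
    · intro E hE
      have hvM : v ∉ E.map emb := hnotv E
      have hDF : insert v (E.map emb) ∈ F := hE
      obtain ⟨hdom, hresp⟩ := hfam _ hDF
      have key : ∀ w : ↥{u : V | u ≠ v}, w ∉ E →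
          ∃ a ∈ E, (G.induce {u | u ≠ v}).Adj a w ∧
            insert v ((insert w (E.erase a)).map emb) ∈ F := by
        intro w hwE
        have hwv : w.val ≠ v := w.2
        have hwM : w.val ∉ E.map emb := by
          intro h
          obtain ⟨a, haE, hav⟩ := (hemb _ _).1 h
          exact hwE (Subtype.ext hav ▸ haE)
        have hwD : w.val ∉ insert v (E.map emb) := by
          rw [Finset.mem_insert]; push_neg; exact ⟨hwv, hwM⟩
        obtain ⟨u, huD, hadj, hmem⟩ := hresp w.val hwD
        have hune : u ≠ v := by
          intro h; subst h
          rw [Finset.erase_insert hvM] at hmem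
          have hvmem := hex _ hmem
          rw [Finset.mem_insert] at hvmem
          rcases hvmem with h1 | h1
          · exact hwv h1.symm
          · exact hvM h1
        have huM : u ∈ E.map emb := by
          rcases Finset.mem_insert.1 huD with h | h
          · exact absurd h hune
          · exact h
        obtain ⟨a, haE, hav⟩ := (hemb E u).1 huM
        refine ⟨a, haE, ?_, ?_⟩
        · show G.Adj a.val w.val
          rw [hav]; exact hadj
        · have hcalc : (insert w (E.erase a)).map emb = insert w.val ((E.map emb).erase u) := by
            rw [Finset.map_insert, Finset.map_erase]
            have e1 : emb w = w.val := rfl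
            have e2 : emb a = u := hav
            rw [e1, e2]
          rw [hcalc]
          have h3 : (insert v (E.map emb)).erase u = insert v ((E.map emb).erase u) :=
            Finset.erase_insert_of_ne hune.symm
          rw [h3] at hmem
          rwa [Finset.insert_comm]
      constructor
      · intro w
        by_cases hwE : w ∈ E
        · exact ⟨w, hwE, Or.inl rfl⟩
        · obtain ⟨a, haE, hadj, -⟩ := key w hwE
          exact ⟨a, haE, Or.inr hadj⟩
      · intro w hw
        obtain ⟨a, haE, hadj, hmem'⟩ := key w hw
        exact ⟨a, haE, hadj, hmem'⟩

end Aux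

/-- If `G` is a smallest graph with `γ∞(G) < θ(G)` and, among such smallest graphs,
one with the maximum number of edges, then `G` is both vertex-critical and
edge-critical with respect to `θ`. -/
theorem smallest_max_edges_is_critical (n : ℕ) (G : SimpleGraph (Fin n))
    (hlt : eternalDomNum G < cliqueCoverNum G)
    (hmin : ∀ m, m < n → ∀ H : SimpleGraph (Fin m),
      ¬ eternalDomNum H < cliqueCoverNum H)
    (hmax : ∀ H : SimpleGraph (Fin n), eternalDomNum H < cliqueCoverNum H →
      H.edgeSet.ncard ≤ G.edgeSet.ncard) :
    (∀ v : Fin n, cliqueCoverNum (G.induce {u | u ≠ v}) = cliqueCoverNum G - 1) ∧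
    (∀ u v : Fin n, u ≠ v → ¬ G.Adj u v →
      cliqueCoverNum (G ⊔ SimpleGraph.fromEdgeSet {s(u, v)}) = cliqueCoverNum G - 1) := by
  constructor
  · intro v
    have h1 : cliqueCoverNum (G.induce {u | u ≠ v}) ≤ cliqueCoverNum G := ccn_induce_le G v
    have h2 : cliqueCoverNum G ≤ cliqueCoverNum (G.induce {u | u ≠ v}) + 1 :=
      ccn_le_induce_succ G v
    have h3 : eternalDomNum (G.induce {u | u ≠ v}) ≤ eternalDomNum G :=
      eternalDomNum_induce_le G v
    have hneq : cliqueCoverNum (G.induce {u | u ≠ v}) ≠ cliqueCoverNum G := by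
      intro heq
      obtain ⟨m, rfl⟩ : ∃ m, n = m + 1 := ⟨n - 1, by have := v.pos; omega⟩
      have e := finSuccAboveEquiv v
      have h4 := hmin m (Nat.lt_succ_self m) ((G.induce {u | u ≠ v}).comap ⇑e)
      rw [eternalDomNum_comap e (G.induce {u | u ≠ v}),
        cliqueCoverNum_comap e (G.induce {u | u ≠ v})] at h4
      omega
    omega
  · intro u v huv hnadj
    set G' := G ⊔ SimpleGraph.fromEdgeSet {s(u, v)} with hG'
    have hnle : ¬ eternalDomNum G' < cliqueCoverNum G' := by
      intro h
      have hle := hmax G' h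
      have hmemG' : s(u, v) ∈ G'.edgeSet := by
        rw [mem_edgeSet]
        exact Or.inr ((fromEdgeSet_adj _).2 ⟨rfl, huv⟩)
      have hsub : G.edgeSet ⊆ G'.edgeSet := edgeSet_mono le_sup_left
      have hss : G.edgeSet ⊂ G'.edgeSet :=
        ⟨hsub, fun habs => hnadj ((mem_edgeSet G).1 (habs hmemG'))⟩
      have := Set.ncard_lt_ncard hss (Set.toFinite _)
      omega
    have h5 : eternalDomNum G' ≤ eternalDomNum G := eternalDomNum_anti le_sup_left
    have h6 : cliqueCoverNum G ≤ cliqueCoverNum G' + 1 := ccn_le_addEdge_succ huv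
    have h7 : cliqueCoverNum G' < cliqueCoverNum G := by
      by_contra hge
      push_neg at hge
      have h8 : cliqueCoverNum G' ≤ eternalDomNum G' := not_lt.1 hnle
      omega
    omega
end
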